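/- Under hypotheses (F1) and (F2), for every λ > 0 the limit of h_λ(s)/s^{β-1} as s → +∞ equals μ₂ · 6^{β/2} (equivalently μ₂ · (√6)^{β}); in particular limsup_{s → +∞} h_λ(s)/s^{β-1} is finite. -/

import Mathlib

open Real Filter Topology

/-- The piecewise function `g` from the paper: `g(t) = sqrt(1 - κ t^2)` for `|t| < sqrt(1/(3κ))`,
and `g(t) = 1/(3 sqrt(2κ) |t|) + sqrt(1/6)` for `|t| ≥ sqrt(1/(3κ))`; in particular `g` is even. -/
noncomputable def gfun (κ : ℝ) (t : ℝ) : ℝ :=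
  if |t| < Real.sqrt (1 / (3 * κ)) then Real.sqrt (1 - κ * t ^ 2)
  else 1 / (3 * Real.sqrt (2 * κ) * |t|) + Real.sqrt (1 / 6)

/-- `G(t) = ∫ s in [0,t], g(s) ds`. -/
noncomputable def Gfun (κ : ℝ) (t : ℝ) : ℝ := ∫ s in (0:ℝ)..t, gfun κ s

/-- `G⁻¹`, the inverse function of `G`. -/
noncomputable def Ginv (κ : ℝ) : ℝ → ℝ := Function.invFun (Gfun κ)

/-- The transformed nonlinearity `h_λ(s) = f(G⁻¹ s)/g(G⁻¹ s) - λ G⁻¹ s / g(G⁻¹ s) + λ s`. -/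
noncomputable def hlam (κ : ℝ) (f : ℝ → ℝ) (lam : ℝ) (s : ℝ) : ℝ :=
  f (Ginv κ s) / gfun κ (Ginv κ s) - lam * Ginv κ s / gfun κ (Ginv κ s) + lam * s

section Helpers
open MeasureTheory
variable {κ : ℝ}






lemma sqrt16_pos : 0 < Real.sqrt (1/6) := Real.sqrt_pos.2 (by norm_num)

lemma three_sqrt_mul (hκ : 0 < κ) :
    3 * Real.sqrt (2 * κ) * Real.sqrt (1 / (3 * κ)) = Real.sqrt 6 := by
  rw [mul_assoc, ← Real.sqrt_mul (by positivity)]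
  have h1 : 2 * κ * (1 / (3 * κ)) = 2/3 := by field_simp
  rw [h1]
  have h9 : Real.sqrt 9 = 3 := by
    rw [show (9:ℝ) = 3^2 by norm_num]; exact Real.sqrt_sq (by norm_num)
  rw [show (6:ℝ) = 9 * (2/3) by norm_num, Real.sqrt_mul (by norm_num : (0:ℝ) ≤ 9), h9]

lemma sqrt16_eq : Real.sqrt (1/6) = (Real.sqrt 6)⁻¹ := by
  rw [one_div, Real.sqrt_inv]

lemma gfun_lower (hκ : 0 < κ) (t : ℝ) : Real.sqrt (1/6) ≤ gfun κ t := by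
  unfold gfun
  split_ifs with h
  · have ht2 : κ * t ^ 2 < 1/3 := by
      have h2 : t ^ 2 < 1 / (3 * κ) := by
        have := Real.sq_sqrt (le_of_lt (show (0:ℝ) < 1/(3*κ) by positivity))
        calc t ^ 2 = |t| ^ 2 := (sq_abs t).symm
        _ < Real.sqrt (1/(3*κ)) ^ 2 := by
            apply pow_lt_pow_left₀ h (abs_nonneg t) (by norm_num)
        _ = 1/(3*κ) := by rw [Real.sq_sqrt (by positivity)]
      calc κ * t ^ 2 < κ * (1/(3*κ)) := by exact mul_lt_mul_of_pos_left h2 hκ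
      _ = 1/3 := by field_simp
    apply Real.sqrt_le_sqrt
    linarith
  · have : 0 ≤ 1 / (3 * Real.sqrt (2 * κ) * |t|) := by positivity
    linarith

lemma gfun_upper (hκ : 0 < κ) (t : ℝ) : gfun κ t ≤ 1 := by
  unfold gfun
  split_ifs with h
  · have : Real.sqrt (1 - κ * t^2) ≤ Real.sqrt 1 := Real.sqrt_le_sqrt (by nlinarith [sq_nonneg t])
    simpa using this
  · push_neg at h
    have hT0 : 0 < Real.sqrt (1/(3*κ)) := by positivity
    have h6 : 0 < Real.sqrt 6 := by positivity
    have h1 : 1 / (3 * Real.sqrt (2 * κ) * |t|) ≤ (Real.sqrt 6)⁻¹ := by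
      rw [← three_sqrt_mul hκ, one_div]
      apply inv_anti₀ (by positivity)
      have : 0 ≤ 3 * Real.sqrt (2*κ) := by positivity
      exact mul_le_mul_of_nonneg_left h this
    have h2 : (2:ℝ) ≤ Real.sqrt 6 := by
      have h4 : Real.sqrt 4 = 2 := by
        rw [show (4:ℝ) = 2^2 by norm_num]; exact Real.sqrt_sq (by norm_num)
      rw [← h4]; exact Real.sqrt_le_sqrt (by norm_num)
    rw [sqrt16_eq]
    have h3 : (Real.sqrt 6)⁻¹ ≤ 2⁻¹ := inv_anti₀ (by norm_num) h2
    linarith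

lemma gfun_pos (hκ : 0 < κ) (t : ℝ) : 0 < gfun κ t := lt_of_lt_of_le sqrt16_pos (gfun_lower hκ t)

lemma gfun_eq_of_ge (hκ : 0 < κ) {t : ℝ} (ht : Real.sqrt (1/(3*κ)) ≤ t) :
    gfun κ t = 1 / (3 * Real.sqrt (2 * κ) * t) + Real.sqrt (1/6) := by
  have h0 : 0 ≤ t := le_trans (Real.sqrt_nonneg _) ht
  have habs : |t| = t := abs_of_nonneg h0
  unfold gfun
  rw [if_neg (by rw [habs]; exact not_lt.2 ht), habs]

lemma measurable_gfun (κ : ℝ) : Measurable (gfun κ) := by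
  unfold gfun
  apply Measurable.ite
  · exact measurableSet_lt (measurable_abs) measurable_const
  · exact (measurable_const.sub ((measurable_id.pow_const 2).const_mul κ)).sqrt
  · exact (measurable_const.div ((measurable_abs).const_mul _)).add measurable_const

lemma intervalIntegrable_gfun (hκ : 0 < κ) (a b : ℝ) :
    IntervalIntegrable (gfun κ) MeasureTheory.volume a b := by
  apply IntervalIntegrable.mono_fun' (g := fun _ => (1:ℝ)) intervalIntegrable_const
  · exact (measurable_gfun κ).aestronglyMeasurable
  · refine Filter.Eventually.of_forall fun x => ?_
    show ‖gfun κ x‖ ≤ 1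
    rw [Real.norm_eq_abs, abs_of_pos (gfun_pos hκ x)]
    exact gfun_upper hκ x




lemma continuous_Gfun (hκ : 0 < κ) : Continuous (Gfun κ) :=
  intervalIntegral.continuous_primitive (fun a b => intervalIntegrable_gfun hκ a b) 0

lemma Gfun_sub (hκ : 0 < κ) (a b : ℝ) :
    Gfun κ b - Gfun κ a = ∫ s in a..b, gfun κ s := by
  unfold Gfun
  have := intervalIntegral.integral_add_adjacent_intervals
    (intervalIntegrable_gfun hκ 0 a) (intervalIntegrable_gfun hκ a b)
  linarith

lemma Gfun_sub_bounds (hκ : 0 < κ) {a b : ℝ} (hab : a ≤ b) :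
    Real.sqrt (1/6) * (b - a) ≤ Gfun κ b - Gfun κ a ∧ Gfun κ b - Gfun κ a ≤ b - a := by
  rw [Gfun_sub hκ]
  constructor
  · have := intervalIntegral.integral_mono_on hab
      (intervalIntegrable_const (c := Real.sqrt (1/6))) (intervalIntegrable_gfun hκ a b)
      (fun x _ => gfun_lower hκ x)
    simpa [mul_comm] using this
  · have := intervalIntegral.integral_mono_on hab
      (intervalIntegrable_gfun hκ a b) (intervalIntegrable_const (c := (1:ℝ)))
      (fun x _ => gfun_upper hκ x)
    simpa using this

lemma strictMono_Gfun (hκ : 0 < κ) : StrictMono (Gfun κ) := by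
  intro a b hab
  have h := (Gfun_sub_bounds hκ hab.le).1
  nlinarith [sqrt16_pos]

lemma tendsto_Gfun_atTop (hκ : 0 < κ) : Tendsto (Gfun κ) atTop atTop := by
  have h0 : Gfun κ 0 = 0 := by unfold Gfun; simp
  apply tendsto_atTop_mono' atTop (show ∀ᶠ t in atTop, Real.sqrt (1/6) * t ≤ Gfun κ t from ?_)
  · exact (tendsto_id.const_mul_atTop sqrt16_pos)
  · filter_upwards [eventually_ge_atTop (0:ℝ)] with t ht
    have := (Gfun_sub_bounds hκ ht).1
    rw [h0] at this; linarith

lemma tendsto_Gfun_atBot (hκ : 0 < κ) : Tendsto (Gfun κ) atBot atBot := by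
  have h0 : Gfun κ 0 = 0 := by unfold Gfun; simp
  refine tendsto_atBot_mono' atBot (show ∀ᶠ t in atBot, Gfun κ t ≤ Real.sqrt (1/6) * t from ?_)
    (tendsto_id.const_mul_atBot sqrt16_pos)
  filter_upwards [eventually_le_atBot (0:ℝ)] with t ht
  have := (Gfun_sub_bounds hκ (show t ≤ 0 from ht)).1
  rw [h0] at this; nlinarith

lemma surjective_Gfun (hκ : 0 < κ) : Function.Surjective (Gfun κ) :=
  Continuous.surjective (continuous_Gfun hκ) (tendsto_Gfun_atTop hκ) (tendsto_Gfun_atBot hκ)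

lemma Ginv_Gfun (hκ : 0 < κ) (t : ℝ) : Ginv κ (Gfun κ t) = t :=
  Function.leftInverse_invFun (strictMono_Gfun hκ).injective t

lemma Gfun_Ginv (hκ : 0 < κ) (s : ℝ) : Gfun κ (Ginv κ s) = s :=
  Function.rightInverse_invFun (surjective_Gfun hκ) s

lemma tendsto_Ginv_atTop (hκ : 0 < κ) : Tendsto (Ginv κ) atTop atTop := by
  rw [tendsto_atTop]
  intro b
  filter_upwards [eventually_ge_atTop (Gfun κ b)] with s hs
  have : Gfun κ b ≤ Gfun κ (Ginv κ s) := by rw [Gfun_Ginv hκ]; exact hs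
  exact (strictMono_Gfun hκ).le_iff_le.1 this




lemma Gfun_formula (hκ : 0 < κ) {t : ℝ} (ht : Real.sqrt (1/(3*κ)) ≤ t) :
    Gfun κ t = Gfun κ (Real.sqrt (1/(3*κ)))
      + (1/(3 * Real.sqrt (2*κ))) * (Real.log t - Real.log (Real.sqrt (1/(3*κ))))
      + Real.sqrt (1/6) * (t - Real.sqrt (1/(3*κ))) := by
  set T0 := Real.sqrt (1/(3*κ)) with hT0def
  have hT0 : 0 < T0 := Real.sqrt_pos.2 (by positivity)
  have hsub := Gfun_sub hκ T0 t
  have hcongr : ∫ s in T0..t, gfun κ s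
      = ∫ s in T0..t, ((1/(3 * Real.sqrt (2*κ))) * (1/s) + Real.sqrt (1/6)) := by
    apply intervalIntegral.integral_congr
    intro x hx
    rw [Set.uIcc_of_le ht] at hx
    rw [gfun_eq_of_ge hκ hx.1]
    field_simp
  have hint1 : IntervalIntegrable (fun s : ℝ => (1/(3 * Real.sqrt (2*κ))) * (1/s))
      MeasureTheory.volume T0 t := by
    apply ContinuousOn.intervalIntegrable
    apply ContinuousOn.mul continuousOn_const
    apply ContinuousOn.div continuousOn_const continuousOn_id
    intro x hx
    rw [Set.uIcc_of_le ht] at hx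
    exact ne_of_gt (lt_of_lt_of_le hT0 hx.1)
  have h0not : (0:ℝ) ∉ Set.uIcc T0 t := by
    rw [Set.uIcc_of_le ht]
    intro h
    exact absurd h.1 (not_le.2 hT0)
  rw [hcongr, intervalIntegral.integral_add hint1 intervalIntegrable_const,
    intervalIntegral.integral_const_mul, integral_one_div h0not,
    Real.log_div (ne_of_gt (lt_of_lt_of_le hT0 ht)) (ne_of_gt hT0), intervalIntegral.integral_const,
    smul_eq_mul, mul_comm (t - T0)] at hsub
  linarith

lemma tendsto_Gfun_div (hκ : 0 < κ) :
    Tendsto (fun t => Gfun κ t / t) atTop (𝓝 (Real.sqrt (1/6))) := by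
  set T0 := Real.sqrt (1/(3*κ)) with hT0def
  set c1 := (1/(3 * Real.sqrt (2*κ))) with hc1
  set A := Gfun κ T0 - c1 * Real.log T0 - Real.sqrt (1/6) * T0 with hA
  have hmain : Tendsto (fun t : ℝ => A / t + c1 * (Real.log t / t) + Real.sqrt (1/6))
      atTop (𝓝 (Real.sqrt (1/6))) := by
    have h1 : Tendsto (fun t : ℝ => A / t) atTop (𝓝 0) := by
      simpa using tendsto_const_nhds.div_atTop (tendsto_id (α := ℝ))
    have h2 : Tendsto (fun t : ℝ => Real.log t / t) atTop (𝓝 0) :=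
      Real.isLittleO_log_id_atTop.tendsto_div_nhds_zero
    have := (h1.add ((h2.const_mul c1))).add (tendsto_const_nhds (x := Real.sqrt (1/6)))
    simpa using this
  apply hmain.congr'
  filter_upwards [eventually_ge_atTop T0, eventually_gt_atTop (0:ℝ)] with t ht ht0
  have hGt : Gfun κ t = A + c1 * Real.log t + Real.sqrt (1/6) * t := by
    rw [Gfun_formula hκ ht, hA]; ring
  rw [hGt, add_div, add_div, mul_div_assoc, mul_div_assoc, div_self (ne_of_gt ht0), mul_one]

lemma tendsto_Ginv_div (hκ : 0 < κ) :
    Tendsto (fun s => Ginv κ s / s) atTop (𝓝 (Real.sqrt 6)) := by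
  have h1 : Tendsto (fun t : ℝ => t / Gfun κ t) atTop (𝓝 (Real.sqrt 6)) := by
    have := (tendsto_Gfun_div hκ).inv₀ (ne_of_gt sqrt16_pos)
    rw [sqrt16_eq] at this
    simp only [inv_inv] at this
    apply this.congr'
    filter_upwards [eventually_gt_atTop (0:ℝ)] with t ht
    rw [inv_div]
  have := h1.comp (tendsto_Ginv_atTop hκ)
  apply this.congr
  intro s
  simp only [Function.comp_apply, Gfun_Ginv hκ]


lemma f_tail (f : ℝ → ℝ) (hf1 : ContDiffOn ℝ 1 f (Set.Ici (0:ℝ))) {β μ₂ : ℝ}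
    (hβ : 2 < β) (hμ₂ : 0 < μ₂)
    (hdinf : Tendsto (fun t : ℝ => deriv f t / t ^ (β - 2)) atTop (𝓝 (μ₂ * (β - 1)))) :
    Tendsto (fun t : ℝ => f t / t ^ (β - 1)) atTop (𝓝 μ₂) := by
  have hβ1 : (0:ℝ) < β - 1 := by linarith
  have hdf_cont : ContinuousOn (deriv f) (Set.Ioi (0:ℝ)) :=
    (hf1.mono Set.Ioi_subset_Ici_self).continuousOn_deriv_of_isOpen isOpen_Ioi le_rfl
  have hdiff : ∀ x : ℝ, 0 < x → HasDerivAt f (deriv f x) x := fun x hx =>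
    ((hf1.contDiffAt (Ici_mem_nhds hx)).differentiableAt one_ne_zero).hasDerivAt
  rw [Metric.tendsto_atTop]
  intro ε hε
  set δ := ε * (β - 1) / 2 with hδdef
  have hδ : 0 < δ := by positivity
  obtain ⟨T₁, hT₁⟩ := Metric.tendsto_atTop.1 hdinf δ hδ
  set T := max T₁ 1 with hTdef
  have hT1 : (1:ℝ) ≤ T := le_max_right _ _
  have hT0 : (0:ℝ) < T := lt_of_lt_of_le one_pos hT1
  set c := μ₂ * (β - 1) with hc
  -- pointwise derivative bound
  have hptw : ∀ x : ℝ, T ≤ x → |deriv f x - c * x ^ (β - 2)| ≤ δ * x ^ (β - 2) := by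
    intro x hx
    have hx0 : (0:ℝ) < x := lt_of_lt_of_le hT0 hx
    have hxp : (0:ℝ) < x ^ (β - 2) := Real.rpow_pos_of_pos hx0 _
    have hd := le_of_lt (hT₁ x (le_trans (le_max_left _ _) hx))
    rw [Real.dist_eq] at hd
    have heq : |deriv f x - c * x ^ (β - 2)|
        = |deriv f x / x ^ (β - 2) - c| * |x ^ (β - 2)| := by
      rw [← abs_mul]
      congr 1
      field_simp
    rw [heq, abs_of_pos hxp]
    exact mul_le_mul_of_nonneg_right hd (le_of_lt hxp)
  -- key integral estimate
  have hkey : ∀ t : ℝ, T ≤ t →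
      |f t - f T - μ₂ * (t ^ (β - 1) - T ^ (β - 1))| ≤ ε / 2 * (t ^ (β - 1) - T ^ (β - 1)) := by
    intro t ht
    have hIccpos : Set.uIcc T t ⊆ Set.Ioi (0:ℝ) := by
      rw [Set.uIcc_of_le ht]
      intro x hx; exact lt_of_lt_of_le hT0 hx.1
    have hintd : IntervalIntegrable (deriv f) MeasureTheory.volume T t :=
      (hdf_cont.mono hIccpos).intervalIntegrable
    have hintp : IntervalIntegrable (fun x : ℝ => x ^ (β - 2)) MeasureTheory.volume T t := by
      apply ContinuousOn.intervalIntegrable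
      apply ContinuousOn.rpow_const continuousOn_id
      intro x hx
      exact Or.inl (ne_of_gt (hIccpos hx))
    have hintcp : IntervalIntegrable (fun x : ℝ => c * x ^ (β - 2)) MeasureTheory.volume T t :=
      hintp.const_mul c
    have hFTC : ∫ x in T..t, deriv f x = f t - f T := by
      apply intervalIntegral.integral_deriv_eq_sub
      · intro x hx
        exact (hdiff x (hIccpos hx)).differentiableAt
      · exact hintd
    have hpow : ∫ x in T..t, x ^ (β - 2) = (t ^ (β - 1) - T ^ (β - 1)) / (β - 1) := by
      rw [integral_rpow (Or.inl (by linarith : (-1:ℝ) < β - 2)),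
        show β - 2 + 1 = β - 1 by ring]
    have hsplit : ∫ x in T..t, (deriv f x - c * x ^ (β - 2))
        = (f t - f T) - μ₂ * (t ^ (β - 1) - T ^ (β - 1)) := by
      rw [intervalIntegral.integral_sub hintd hintcp, hFTC,
        intervalIntegral.integral_const_mul, hpow, hc]
      field_simp
    have hbnd : ‖∫ x in T..t, (deriv f x - c * x ^ (β - 2))‖
        ≤ |∫ x in T..t, δ * x ^ (β - 2)| := by
      refine le_trans (intervalIntegral.norm_integral_le_of_norm_le ht
        (Filter.Eventually.of_forall fun x hx => ?_) (hintp.const_mul δ)) (le_abs_self _)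
      exact hptw x (le_of_lt hx.1)
    rw [hsplit] at hbnd
    have hTt : T ^ (β - 1) ≤ t ^ (β - 1) :=
      Real.rpow_le_rpow (le_of_lt hT0) ht (le_of_lt hβ1)
    have hδint : ∫ x in T..t, δ * x ^ (β - 2)
        = δ * ((t ^ (β - 1) - T ^ (β - 1)) / (β - 1)) := by
      rw [intervalIntegral.integral_const_mul, hpow]
    rw [hδint] at hbnd
    have : δ * ((t ^ (β - 1) - T ^ (β - 1)) / (β - 1)) = ε / 2 * (t ^ (β - 1) - T ^ (β - 1)) := by
      rw [hδdef]; field_simp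
    rw [this] at hbnd
    calc |f t - f T - μ₂ * (t ^ (β - 1) - T ^ (β - 1))|
        ≤ |ε / 2 * (t ^ (β - 1) - T ^ (β - 1))| := hbnd
      _ = ε / 2 * (t ^ (β - 1) - T ^ (β - 1)) := by
          apply abs_of_nonneg
          have hTt : T ^ (β - 1) ≤ t ^ (β - 1) :=
            Real.rpow_le_rpow (le_of_lt hT0) ht (le_of_lt hβ1)
          have : (0:ℝ) ≤ ε / 2 := by positivity
          nlinarith
  -- conclude
  set C := |f T| + μ₂ * T ^ (β - 1) with hC
  have hC0 : 0 ≤ C := by positivity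
  obtain ⟨T₂, hT₂⟩ := Filter.eventually_atTop.1
    ((tendsto_rpow_atTop hβ1).eventually_ge_atTop (2 * C / ε + 1))
  refine ⟨max T T₂, fun t ht => ?_⟩
  have htT : T ≤ t := le_trans (le_max_left _ _) ht
  have ht0 : (0:ℝ) < t := lt_of_lt_of_le hT0 htT
  have htp : (0:ℝ) < t ^ (β - 1) := Real.rpow_pos_of_pos ht0 _
  have htp2 : 2 * C / ε + 1 ≤ t ^ (β - 1) := hT₂ t (le_trans (le_max_right _ _) ht)
  have hTt : T ^ (β - 1) ≤ t ^ (β - 1) :=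
    Real.rpow_le_rpow (le_of_lt hT0) htT (le_of_lt hβ1)
  have hTp0 : (0:ℝ) < T ^ (β - 1) := Real.rpow_pos_of_pos hT0 _
  have hmain : |f t - μ₂ * t ^ (β - 1)| ≤ ε / 2 * t ^ (β - 1) + C := by
    have h1 := hkey t htT
    have : |f t - μ₂ * t ^ (β - 1)|
        ≤ |f t - f T - μ₂ * (t ^ (β - 1) - T ^ (β - 1))| + |f T| + μ₂ * T ^ (β - 1) := by
      have := abs_add_le (f t - f T - μ₂ * (t ^ (β - 1) - T ^ (β - 1))) (f T - μ₂ * T ^ (β - 1))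
      have h2 : |f T - μ₂ * T ^ (β - 1)| ≤ |f T| + μ₂ * T ^ (β - 1) := by
        have := abs_sub (f T) (μ₂ * T ^ (β - 1))
        have h3 : |μ₂ * T ^ (β - 1)| = μ₂ * T ^ (β - 1) := abs_of_pos (by positivity)
        calc |f T - μ₂ * T ^ (β - 1)| ≤ |f T| + |μ₂ * T ^ (β - 1)| := abs_sub _ _
          _ = |f T| + μ₂ * T ^ (β - 1) := by rw [h3]
      calc |f t - μ₂ * t ^ (β - 1)|
          = |(f t - f T - μ₂ * (t ^ (β - 1) - T ^ (β - 1))) + (f T - μ₂ * T ^ (β - 1))| := by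
            congr 1; ring
        _ ≤ |f t - f T - μ₂ * (t ^ (β - 1) - T ^ (β - 1))| + |f T - μ₂ * T ^ (β - 1)| :=
            abs_add_le _ _
        _ ≤ |f t - f T - μ₂ * (t ^ (β - 1) - T ^ (β - 1))| + (|f T| + μ₂ * T ^ (β - 1)) := by
            linarith
        _ = |f t - f T - μ₂ * (t ^ (β - 1) - T ^ (β - 1))| + |f T| + μ₂ * T ^ (β - 1) := by ring
    have h4 : ε / 2 * (t ^ (β - 1) - T ^ (β - 1)) ≤ ε / 2 * t ^ (β - 1) := by nlinarith
    calc |f t - μ₂ * t ^ (β - 1)|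
        ≤ |f t - f T - μ₂ * (t ^ (β - 1) - T ^ (β - 1))| + |f T| + μ₂ * T ^ (β - 1) := this
      _ ≤ ε / 2 * (t ^ (β - 1) - T ^ (β - 1)) + |f T| + μ₂ * T ^ (β - 1) := by linarith
      _ ≤ ε / 2 * t ^ (β - 1) + C := by rw [hC]; linarith
  rw [Real.dist_eq]
  have heq : f t / t ^ (β - 1) - μ₂ = (f t - μ₂ * t ^ (β - 1)) / t ^ (β - 1) := by
    field_simp
  rw [heq, abs_div, abs_of_pos htp, div_lt_iff₀ htp]
  have hC2 : C < ε / 2 * (2 * C / ε + 1) := by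
    have : ε / 2 * (2 * C / ε + 1) = C + ε / 2 := by field_simp
    rw [this]; linarith
  calc |f t - μ₂ * t ^ (β - 1)| ≤ ε / 2 * t ^ (β - 1) + C := hmain
    _ < ε / 2 * t ^ (β - 1) + ε / 2 * (2 * C / ε + 1) := by linarith
    _ ≤ ε / 2 * t ^ (β - 1) + ε / 2 * t ^ (β - 1) := by nlinarith
    _ = ε * t ^ (β - 1) := by ring



lemma tendsto_gfun_atTop {κ : ℝ} (hκ : 0 < κ) :
    Tendsto (gfun κ) atTop (𝓝 (Real.sqrt (1/6))) := by
  have h1 : Tendsto (fun t : ℝ => 1 / (3 * Real.sqrt (2*κ) * t) + Real.sqrt (1/6))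
      atTop (𝓝 (Real.sqrt (1/6))) := by
    have h2 : Tendsto (fun t : ℝ => 1 / (3 * Real.sqrt (2*κ) * t)) atTop (𝓝 0) := by
      apply Tendsto.div_atTop (tendsto_const_nhds (x := (1:ℝ)))
      exact tendsto_id.const_mul_atTop (by positivity)
    simpa using h2.add (tendsto_const_nhds (x := Real.sqrt (1/6)))
  apply h1.congr'
  filter_upwards [eventually_ge_atTop (Real.sqrt (1/(3*κ)))] with t ht
  rw [gfun_eq_of_ge hκ ht]

end Helpers

/-- under (F1)-(F2), for every `λ > 0`,
`h_λ(s)/s^(β-1) → μ₂ * (sqrt 6)^β` as `s → +∞`. -/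
theorem stmt_16 (N : ℕ) (hN : 3 ≤ N) (f : ℝ → ℝ)
    (hf1 : ContDiffOn ℝ 1 f (Set.Ici (0 : ℝ))) (hf0 : f 0 = 0)
    (hfpos : ∀ s : ℝ, 0 < s → 0 < f s)
    (α β μ₁ μ₂ : ℝ)
    (hα : 2 < α ∧ α < 2 * N / (N - 2)) (hβ : 2 < β ∧ β < 2 * N / (N - 2))
    (hμ₁ : 0 < μ₁) (hμ₂ : 0 < μ₂)
    (hd0 : Tendsto (fun t : ℝ => deriv f t / t ^ (α - 2)) (𝓝[>] (0 : ℝ))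
      (𝓝 (μ₁ * (α - 1))))
    (hdinf : Tendsto (fun t : ℝ => deriv f t / t ^ (β - 2)) atTop
      (𝓝 (μ₂ * (β - 1))))
    (κ : ℝ) (hκ : 0 < κ) (lam : ℝ) (hlam_pos : 0 < lam) :
    Tendsto (fun s : ℝ => hlam κ f lam s / s ^ (β - 1)) atTop
      (𝓝 (μ₂ * Real.sqrt 6 ^ β)) := by
  obtain ⟨hβ2, -⟩ := hβ
  have h6 : (0:ℝ) < Real.sqrt 6 := Real.sqrt_pos.2 (by norm_num)
  have hutop := tendsto_Ginv_atTop hκ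
  have hudiv := tendsto_Ginv_div hκ
  -- component limits
  have hfu : Tendsto (fun s : ℝ => f (Ginv κ s) / (Ginv κ s) ^ (β - 1)) atTop (𝓝 μ₂) :=
    (f_tail f hf1 hβ2 hμ₂ hdinf).comp hutop
  have hgu : Tendsto (fun s : ℝ => gfun κ (Ginv κ s)) atTop (𝓝 (Real.sqrt (1/6))) :=
    (tendsto_gfun_atTop hκ).comp hutop
  have hgu_inv : Tendsto (fun s : ℝ => (gfun κ (Ginv κ s))⁻¹) atTop (𝓝 (Real.sqrt 6)) := by
    have := hgu.inv₀ (ne_of_gt sqrt16_pos)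
    rwa [sqrt16_eq, inv_inv] at this
  have hpow : Tendsto (fun s : ℝ => (Ginv κ s / s) ^ (β - 1)) atTop
      (𝓝 (Real.sqrt 6 ^ (β - 1))) :=
    hudiv.rpow_const (Or.inl (ne_of_gt h6))
  have hs2β : Tendsto (fun s : ℝ => s ^ (2 - β)) atTop (𝓝 0) := by
    have := tendsto_rpow_neg_atTop (show (0:ℝ) < β - 2 by linarith)
    apply this.congr
    intro x
    rw [show -(β - 2) = 2 - β by ring]
  -- combined limit
  have hF : Tendsto (fun s : ℝ =>
      (f (Ginv κ s) / (Ginv κ s) ^ (β - 1)) * (Ginv κ s / s) ^ (β - 1) * (gfun κ (Ginv κ s))⁻¹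
      - lam * ((Ginv κ s / s) * (gfun κ (Ginv κ s))⁻¹ * s ^ (2 - β))
      + lam * s ^ (2 - β)) atTop
      (𝓝 (μ₂ * Real.sqrt 6 ^ β)) := by
    have h1 := ((hfu.mul hpow).mul hgu_inv).sub
      (((hudiv.mul hgu_inv).mul hs2β).const_mul lam) |>.add (hs2β.const_mul lam)
    have heqc : μ₂ * Real.sqrt 6 ^ (β - 1) * Real.sqrt 6 - lam * (Real.sqrt 6 * Real.sqrt 6 * 0)
        + lam * 0 = μ₂ * Real.sqrt 6 ^ β := by
      rw [show β = (β - 1) + 1 by ring, Real.rpow_add_one (ne_of_gt h6)]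
      ring
    rw [← heqc]
    exact h1
  apply hF.congr'
  filter_upwards [hutop.eventually_ge_atTop 1, eventually_gt_atTop (0:ℝ)] with s hu hs
  set u := Ginv κ s with hudef
  have hu0 : (0:ℝ) < u := lt_of_lt_of_le one_pos hu
  have hg0 : (0:ℝ) < gfun κ u := gfun_pos hκ u
  have hsp : (0:ℝ) < s ^ (β - 1) := Real.rpow_pos_of_pos hs _
  have hup : (0:ℝ) < u ^ (β - 1) := Real.rpow_pos_of_pos hu0 _
  have h1 : (u / s) ^ (β - 1) = u ^ (β - 1) / s ^ (β - 1) :=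
    Real.div_rpow (le_of_lt hu0) (le_of_lt hs) _
  have h2 : s ^ (2 - β) = s / s ^ (β - 1) := by
    rw [eq_div_iff (ne_of_gt hsp), ← Real.rpow_add hs, show 2 - β + (β - 1) = 1 by ring,
      Real.rpow_one]
  unfold hlam
  rw [h1, h2]
  field_simp
  rw [← hudef]
  have hgi : gfun κ u * (gfun κ u)⁻¹ = 1 := mul_inv_cancel₀ (ne_of_gt hg0)
  linear_combination (lam * u - f u) * hgi
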